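/- Let G = (V, E) be a finite undirected graph admitting a strongly connected orientation. Then every strongly connected orientation of G has maximum indegree at least max over nonempty U ⊆ V of ⌈(m(U) + c(U)) / |U|⌉, where m(U) is the number of edges of G with both endpoints in U and c(U) is the number of connected components of the induced subgraph G[V ∖ U]. -/

import Mathlib

/-- An orientation of an undirected simple graph `G`: each edge is assigned
exactly one direction, giving the arc relation `arc`. -/
structure GraphOrientation {V : Type*} (G : SimpleGraph V) where
  arc : V → V → Prop
  adj_iff : ∀ u v, G.Adj u v ↔ (arc u v ∨ arc v u)
  asymm : ∀ u v, arc u v → ¬ arc v u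

/-- The indegree of a vertex in an orientation. -/
noncomputable def indeg {V : Type*} {G : SimpleGraph V} (D : GraphOrientation G) (v : V) : ℕ :=
  {u | D.arc u v}.ncard

/-- The list of consecutive arcs of a path given as a list of vertices. -/
def pathArcs {V : Type*} (p : List V) : List (V × V) := p.zip p.tail

/-- The list of arcs of a cycle given as a list of (distinct) vertices,
including the closing arc from the last vertex back to the first. -/
def cycleArcs {V : Type*} (p : List V) : List (V × V) := p.zip (p.rotate 1)

/-- `p` is a (simple) directed path from `u` to `v` with respect to the arc relation `A`. -/
def IsDipath {V : Type*} (A : V → V → Prop) (p : List V) (u v : V) : Prop :=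
  p.head? = some u ∧ p.getLast? = some v ∧ p.Nodup ∧ p.Chain' A

/-- `D'` is obtained from `D` by reversing exactly the arcs in the list `A`
(all of which must be arcs of `D`). -/
def ReversalAlong {V : Type*} {G : SimpleGraph V} (D D' : GraphOrientation G)
    (A : List (V × V)) : Prop :=
  (∀ a ∈ A, D.arc a.1 a.2) ∧ ∀ u v, D'.arc u v ↔ ((D.arc u v ∧ (u, v) ∉ A) ∨ (v, u) ∈ A)

/-- `D'` is obtained from `D` by reversing every arc of some directed cycle. -/
def CycleReversal {V : Type*} {G : SimpleGraph V} (D D' : GraphOrientation G) : Prop :=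
  ∃ p : List V, p ≠ [] ∧ p.Nodup ∧ ReversalAlong D D' (cycleArcs p)

/-- `D'` is obtained from `D` by a weak reversal: reversing a directed path
from `u` to `v` where `δ(u) = δ(v) - 1`. -/
def WeakReversal {V : Type*} {G : SimpleGraph V} (D D' : GraphOrientation G) : Prop :=
  ∃ (p : List V) (u v : V), IsDipath D.arc p u v ∧ indeg D u + 1 = indeg D v ∧
    ReversalAlong D D' (pathArcs p)

/-- `D` contains no reversible path, i.e. no directed path from `u` to `v`
with `δ(u) < δ(v) - 1`. -/
def NoReversiblePath {V : Type*} {G : SimpleGraph V} (D : GraphOrientation G) : Prop :=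
  ∀ u v : V, Relation.ReflTransGen D.arc u v → indeg D v ≤ indeg D u + 1

/-- The indegree sequence of an orientation, sorted in decreasing order. -/
noncomputable def degSeq {V : Type*} [Fintype V] {G : SimpleGraph V}
    (D : GraphOrientation G) : List ℕ :=
  ((Finset.univ.val.map (indeg D)).sort (· ≤ ·)).reverse

/-- Lexicographic (non-strict) comparison of lists of naturals. -/
def lexLE (l₁ l₂ : List ℕ) : Prop := l₁ = l₂ ∨ List.Lex (· < ·) l₁ l₂

/-- `u` two-reaches `v`: there are two arc-disjoint directed paths from `u` to `v`. -/
def TwoReaches {V : Type*} (A : V → V → Prop) (u v : V) : Prop :=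
  ∃ p q : List V, IsDipath A p u v ∧ IsDipath A q u v ∧ ∀ a ∈ pathArcs p, a ∉ pathArcs q

/-- Reachability inside the induced subgraph `G[U]`. -/
def ReachIn {V : Type*} (G : SimpleGraph V) (U : Set V) (x y : V) : Prop :=
  Relation.ReflTransGen (fun a b => a ∈ U ∧ b ∈ U ∧ G.Adj a b) x y

/-- `C` is a connected component of the induced undirected subgraph `G[U]`. -/
def IsCompOf {V : Type*} (G : SimpleGraph V) (U C : Set V) : Prop :=
  ∃ x ∈ U, C = {y | ReachIn G U x y}

/-- `m(U)`: the number of edges of `G` with both endpoints in `U`. -/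
noncomputable def edgesIn {V : Type*} (G : SimpleGraph V) (U : Finset V) : ℕ :=
  {e : Sym2 V | e ∈ G.edgeSet ∧ ∀ x ∈ e, x ∈ U}.ncard

/-- `c(U)`: the number of connected components of the induced subgraph `G[V ∖ U]`. -/
noncomputable def compCount {V : Type*} (G : SimpleGraph V) (U : Finset V) : ℕ :=
  Nat.card ((G.induce ((↑U : Set V)ᶜ)).ConnectedComponent)

lemma cross_lemma {V : Type*} {G : SimpleGraph V} (D : GraphOrientation G)
    (S : Set V) :
    ∀ x u : V, Relation.ReflTransGen D.arc x u → x ∉ S → u ∈ S →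
      ∃ w u' : V, D.arc w u' ∧ w ∉ S ∧ u' ∈ S ∧
        Relation.ReflTransGen (fun a b => a ∉ S ∧ b ∉ S ∧ D.arc a b) x w := by
  intro x u h
  induction h using Relation.ReflTransGen.head_induction_on with
  | refl => intro hx hu; exact absurd hu hx
  | head hab htail ih =>
    rename_i a b
    intro ha hu
    by_cases hb : b ∈ S
    · exact ⟨a, b, hab, ha, hb, Relation.ReflTransGen.refl⟩
    · obtain ⟨w, u', harc, hw, hu', hchain⟩ := ih hb hu
      exact ⟨w, u', harc, hw, hu', Relation.ReflTransGen.head ⟨ha, hb, hab⟩ hchain⟩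

lemma reach_induce_of_chain {V : Type*} {G : SimpleGraph V} (D : GraphOrientation G)
    (S : Set V) :
    ∀ x w : V, Relation.ReflTransGen (fun a b => a ∉ S ∧ b ∉ S ∧ D.arc a b) x w →
      ∀ (hx : x ∈ Sᶜ) (hw : w ∈ Sᶜ),
        (G.induce Sᶜ).Reachable ⟨x, hx⟩ ⟨w, hw⟩ := by
  intro x w h
  induction h using Relation.ReflTransGen.head_induction_on with
  | refl => intro hx hw; exact SimpleGraph.Reachable.refl _
  | head hab htail ih =>
    rename_i a b
    intro ha hw
    obtain ⟨ha', hb', harc⟩ := hab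
    have hadj : (G.induce Sᶜ).Adj ⟨a, ha⟩ ⟨b, hb'⟩ := (D.adj_iff a b).2 (Or.inl harc)
    exact hadj.reachable.trans (ih hb' hw)

/-- Lower bound: any strongly connected orientation has maximum indegree at least
`max_{∅ ≠ U ⊆ V} ⌈(m(U) + c(U)) / |U|⌉`. -/
theorem stmt_12 {V : Type*} [Fintype V] (G : SimpleGraph V) (D : GraphOrientation G)
    (hsc : ∀ u v : V, Relation.ReflTransGen D.arc u v) :
    (⨆ U : {U : Finset V // U.Nonempty},
        ⌈((edgesIn G U.1 + compCount G U.1 : ℚ)) / (U.1.card : ℚ)⌉₊)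
      ≤ Finset.univ.sup (indeg D) := by
  classical
  set K := Finset.univ.sup (indeg D) with hK
  rcases isEmpty_or_nonempty V with h | h
  · haveI : IsEmpty {U : Finset V // U.Nonempty} :=
      ⟨fun U => (U.2).elim (fun x _ => h.false x)⟩
    rw [ciSup_of_empty]
    exact bot_le
  · haveI : Nonempty {U : Finset V // U.Nonempty} :=
      ⟨⟨{h.some}, Finset.singleton_nonempty _⟩⟩
    apply ciSup_le
    rintro ⟨U, hU⟩
    have hcardpos : (0:ℚ) < (U.card : ℚ) := by
      exact_mod_cast Finset.card_pos.mpr hU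
    rw [Nat.ceil_le, div_le_iff₀ hcardpos]
    have key : edgesIn G U + compCount G U ≤ K * U.card := by
      set T : Finset (V × V) := Finset.univ.filter (fun p => D.arc p.1 p.2 ∧ p.2 ∈ U) with hT
      set T₁ := T.filter (fun p => p.1 ∈ U) with hT1
      set T₂ := T.filter (fun p => ¬ p.1 ∈ U) with hT2
      -- edges
      have hEdge : edgesIn G U ≤ T₁.card := by
        have hsub : {e : Sym2 V | e ∈ G.edgeSet ∧ ∀ x ∈ e, x ∈ U}
            ⊆ (Sym2.mk (α := V)).uncurry '' (↑T₁ : Set (V × V)) := by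
          intro e he
          revert he
          induction e using Sym2.inductionOn with
          | hf x y =>
            intro he
            obtain ⟨hadj, hmem⟩ := he
            rw [SimpleGraph.mem_edgeSet] at hadj
            have hx : x ∈ U := hmem x (by simp)
            have hy : y ∈ U := hmem y (by simp)
            rcases (D.adj_iff x y).1 hadj with harc | harc
            · exact ⟨(x, y), by simp [hT1, hT, harc, hx, hy], rfl⟩
            · exact ⟨(y, x), by simp [hT1, hT, harc, hx, hy], Sym2.eq_swap.symm⟩
        calc edgesIn G U
            ≤ ((Sym2.mk (α := V)).uncurry '' (↑T₁ : Set (V × V))).ncard :=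
              Set.ncard_le_ncard hsub (((T₁ : Set (V × V)).toFinite).image _)
          _ ≤ (↑T₁ : Set (V × V)).ncard := Set.ncard_image_le ((T₁ : Set (V × V)).toFinite)
          _ = T₁.card := Set.ncard_coe_finset _
      -- components
      have hComp : compCount G U ≤ T₂.card := by
        have hmem : ∀ p : (↑T₂ : Set (V × V)), p.1.1 ∈ ((↑U : Set V)ᶜ) := by
          rintro ⟨p, hp⟩
          simp only [Finset.mem_coe, hT2, hT, Finset.mem_filter, Finset.mem_univ] at hp
          simpa using hp.2
        have hsurj : Function.Surjective
            (fun p : (↑T₂ : Set (V × V)) =>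
              (G.induce ((↑U : Set V)ᶜ)).connectedComponentMk ⟨p.1.1, hmem p⟩) := by
          intro c
          obtain ⟨⟨x, hx⟩, rfl⟩ := c.exists_rep
          obtain ⟨u₀, hu₀⟩ := hU
          have hxU : x ∉ (↑U : Set V) := hx
          obtain ⟨w, u', harc, hw, hu', hchain⟩ :=
            cross_lemma D (↑U : Set V) x u₀ (hsc x u₀) hxU (by exact hu₀)
          have hpT : (w, u') ∈ T₂ := by
            simp only [hT2, hT, Finset.mem_filter, Finset.mem_univ, true_and]
            exact ⟨⟨harc, hu'⟩, by simpa using hw⟩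
          refine ⟨⟨(w, u'), by exact_mod_cast hpT⟩, ?_⟩
          have hreach := reach_induce_of_chain D (↑U : Set V) x w hchain hx (by exact hw)
          exact (SimpleGraph.ConnectedComponent.sound hreach.symm)
        calc compCount G U ≤ Nat.card (↑T₂ : Set (V × V)) :=
              Nat.card_le_card_of_surjective _ hsurj
          _ = (↑T₂ : Set (V × V)).ncard := Nat.card_coe_set_eq _
          _ = T₂.card := Set.ncard_coe_finset _
      -- split
      have hsplit : T₁.card + T₂.card = T.card :=
        Finset.card_filter_add_card_filter_not (p := fun p : V × V => p.1 ∈ U)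
      -- sum
      have hTsum : T.card = ∑ v ∈ U, indeg D v := by
        rw [Finset.card_eq_sum_card_fiberwise (f := Prod.snd) (t := U)
          (fun p hp => by simp only [hT, Finset.coe_filter, Set.mem_setOf_eq] at hp; exact hp.2.2)]
        refine Finset.sum_congr rfl (fun v hv => ?_)
        have hindeg : indeg D v = (Finset.univ.filter fun u => D.arc u v).card := by
          rw [indeg, ← Set.ncard_coe_finset]
          congr 1
          ext u; simp
        rw [hindeg]
        refine Finset.card_bij (fun (p : V × V) _ => p.1) ?_ ?_ ?_
        · intro p hp
          simp only [hT, Finset.mem_filter, Finset.mem_univ, true_and] at hp ⊢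
          rw [← hp.2]
          exact hp.1.1
        · intro p hp q hq hpq
          simp only [hT, Finset.mem_filter] at hp hq
          exact Prod.ext hpq (hp.2.trans hq.2.symm)
        · intro u hu
          simp only [Finset.mem_filter, Finset.mem_univ, true_and] at hu
          exact ⟨(u, v), by simp [hT, hu, hv], rfl⟩
      have hbound : ∑ v ∈ U, indeg D v ≤ U.card * K := by
        have := Finset.sum_le_card_nsmul U (indeg D) K
          (fun v _ => Finset.le_sup (Finset.mem_univ v))
        simpa [smul_eq_mul] using this
      calc edgesIn G U + compCount G U ≤ T₁.card + T₂.card := Nat.add_le_add hEdge hComp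
        _ = T.card := hsplit
        _ = ∑ v ∈ U, indeg D v := hTsum
        _ ≤ U.card * K := hbound
        _ = K * U.card := Nat.mul_comm _ _
    exact_mod_cast key
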